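/- Let Σ be a symmetric positive definite real C×C matrix with ‖I - Σ‖₂ < 1 (operator norm). Define the Newton iteration Σ₀ = I, Σ_k = (1/2)(3Σ_{k-1} - Σ_{k-1}³Σ). Then Σ_k converges to Σ^{-1/2}, the inverse of the unique positive definite square root of Σ. -/

import Mathlib

open Matrix

/-- Spectral (ℓ²) operator norm of a square real matrix. -/
noncomputable def opNorm2 {C : ℕ} (A : Matrix (Fin C) (Fin C) ℝ) : ℝ :=
  ‖Matrix.toEuclideanCLM (𝕜 := ℝ) A‖

/-- Scalar Newton–Schulz iteration. -/
noncomputable def pIter : ℕ → ℝ → ℝ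
  | 0, _ => 1
  | (k+1), x => (1/2) * (3 * pIter k x - (pIter k x)^3 * x)

lemma pIter_zero : pIter 0 = fun _ => (1:ℝ) := rfl

lemma pIter_succ (k : ℕ) :
    pIter (k+1) = fun x => (1/2) * (3 * pIter k x - (pIter k x)^3 * x) := rfl

@[fun_prop]
lemma pIter_continuous (k : ℕ) : Continuous (pIter k) := by
  induction k with
  | zero => rw [pIter_zero]; exact continuous_const
  | succ k ih => rw [pIter_succ]; fun_prop

/-- Convergence of the error sequence `e (k+1) = e k ^ 2 * (3 - e k) / 2`. -/
lemma auxE (e : ℕ → ℝ) (herec : ∀ k, e (k+1) = (e k)^2 * (3 - e k) / 2)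
    (h1a : 0 ≤ e 1) (h1b : e 1 < 1) :
    Filter.Tendsto e Filter.atTop (nhds 0) := by
  obtain ⟨q, hqdef⟩ : ∃ q : ℝ, q = e 1 * (3 - e 1) / 2 := ⟨_, rfl⟩
  have hq0 : 0 ≤ q := by
    rw [hqdef]
    nlinarith [mul_nonneg h1a (by linarith : (0:ℝ) ≤ 3 - e 1)]
  have hq1 : q < 1 := by
    rw [hqdef]
    nlinarith [mul_pos (by linarith : (0:ℝ) < 1 - e 1) (by linarith : (0:ℝ) < 2 - e 1)]
  have key : ∀ k, 0 ≤ e (k+1) ∧ e (k+1) ≤ e 1 * q ^ k := by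
    intro k
    induction k with
    | zero => exact ⟨h1a, by simp⟩
    | succ k ih =>
      obtain ⟨hx0, hxle⟩ := ih
      have hqpow : q ^ k ≤ 1 := pow_le_one₀ hq0 hq1.le
      have hxe1 : e (k+1) ≤ e 1 := hxle.trans (by nlinarith)
      constructor
      · rw [herec]
        nlinarith [mul_nonneg (sq_nonneg (e (k+1))) (by linarith : (0:ℝ) ≤ 3 - e (k+1))]
      · rw [herec]
        have h1 : e (k+1) * (3 - e (k+1)) / 2 ≤ q := by
          rw [hqdef]
          nlinarith [mul_nonneg (by linarith : (0:ℝ) ≤ e 1 - e (k+1))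
            (by linarith : (0:ℝ) ≤ 3 - e 1 - e (k+1))]
        have h2' : e (k+1) * (e (k+1) * (3 - e (k+1)) / 2) ≤ (e 1 * q ^ k) * q :=
          mul_le_mul hxle h1
            (by nlinarith [mul_nonneg hx0 (by linarith : (0:ℝ) ≤ 3 - e (k+1))])
            (mul_nonneg h1a (pow_nonneg hq0 k))
        calc (e (k+1))^2 * (3 - e (k+1)) / 2
            = e (k+1) * (e (k+1) * (3 - e (k+1)) / 2) := by ring
          _ ≤ (e 1 * q ^ k) * q := h2'
          _ = e 1 * q ^ (k+1) := by ring
  have hgeo : Filter.Tendsto (fun k => e 1 * q ^ k) Filter.atTop (nhds 0) := by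
    simpa using (tendsto_pow_atTop_nhds_zero_of_lt_one hq0 hq1).const_mul (e 1)
  have he_shift : Filter.Tendsto (fun k => e (k+1)) Filter.atTop (nhds 0) :=
    squeeze_zero (fun k => (key k).1) (fun k => (key k).2) hgeo
  exact (Filter.tendsto_add_atTop_iff_nat 1).mp he_shift

lemma pIter_tendsto {l : ℝ} (h0 : 0 < l) (h2 : l < 2) :
    Filter.Tendsto (fun k => pIter k l) Filter.atTop (nhds (Real.sqrt l)⁻¹) := by
  obtain ⟨s, hsdef⟩ : ∃ s : ℝ, s = Real.sqrt l := ⟨_, rfl⟩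
  have hs0 : 0 < s := hsdef ▸ Real.sqrt_pos.mpr h0
  have hs2 : s ^ 2 = l := hsdef ▸ Real.sq_sqrt h0.le
  have hs3 : s ^ 2 < 3 := by linarith
  have hyrec : ∀ k, pIter (k+1) l * s = (3 * (pIter k l * s) - (pIter k l * s)^3) / 2 := by
    intro k
    rw [pIter_succ]
    linear_combination (pIter k l ^ 3 * s / 2) * hs2
  have herec : ∀ k, (1 - pIter (k+1) l * s)
      = (1 - pIter k l * s)^2 * (3 - (1 - pIter k l * s)) / 2 := by
    intro k
    rw [hyrec k]
    ring
  have he0 : 1 - pIter 0 l * s = 1 - s := by rw [pIter_zero]; ring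
  have he1 : 1 - pIter 1 l * s = (1-s)^2 * (3 - (1-s)) / 2 := by rw [herec 0, he0]
  have h1a : 0 ≤ 1 - pIter 1 l * s := by
    rw [he1]; nlinarith [sq_nonneg (1-s)]
  have h1b : 1 - pIter 1 l * s < 1 := by
    rw [he1]; nlinarith [mul_pos hs0 (by linarith : (0:ℝ) < 3 - s^2)]
  have he_t : Filter.Tendsto (fun k => 1 - pIter k l * s) Filter.atTop (nhds 0) :=
    auxE _ herec h1a h1b
  have hy_t : Filter.Tendsto (fun k => pIter k l * s) Filter.atTop (nhds 1) := by
    have := (tendsto_const_nhds (x := (1:ℝ)) (f := Filter.atTop)).sub he_t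
    simpa using this
  have hfin := hy_t.mul_const s⁻¹
  have heq : (fun k => pIter k l * s * s⁻¹) = fun k => pIter k l := by
    funext k
    rw [mul_assoc, mul_inv_cancel₀ hs0.ne', mul_one]
  rw [heq] at hfin
  simpa [hsdef] using hfin

set_option maxHeartbeats 1000000 in
set_option synthInstance.maxHeartbeats 200000 in
theorem stmt7 {C : ℕ} (Sig : Matrix (Fin C) (Fin C) ℝ)
    (hSig : Sig.PosDef) (hnorm : opNorm2 (1 - Sig) < 1)
    (S : Matrix (Fin C) (Fin C) ℝ) (hS : S.PosDef) (hSsq : S * S = Sig)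
    (f : ℕ → Matrix (Fin C) (Fin C) ℝ)
    (hf0 : f 0 = 1)
    (hfk : ∀ k, f (k + 1) = (1 / 2 : ℝ) • (3 • f k - f k ^ 3 * Sig)) :
    Filter.Tendsto f Filter.atTop (nhds S⁻¹) := by
  rcases Nat.eq_zero_or_pos C with hC | hC
  · subst hC
    have hsub : Subsingleton (Matrix (Fin 0) (Fin 0) ℝ) := by
      constructor; intro a b; ext i; exact absurd i.2 (by omega)
    have : f = fun _ => S⁻¹ := funext fun k => hsub.elim _ _
    rw [this]
    exact tendsto_const_nhds
  haveI : Nonempty (Fin C) := ⟨⟨0, hC⟩⟩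
  haveI hnt : Nontrivial (EuclideanSpace ℝ (Fin C)) :=
    inferInstanceAs (Nontrivial (PiLp 2 fun _ : Fin C => ℝ))
  have hH : Sig.IsHermitian := hSig.1
  have hSA : IsSelfAdjoint Sig := hH
  have hpos : ∀ i, 0 < hH.eigenvalues i := fun i => hSig.eigenvalues_pos i
  -- eigenvalues are < 2
  have hlt2 : ∀ i, hH.eigenvalues i < 2 := by
    intro i
    have hmem : hH.eigenvalues i ∈ spectrum ℝ Sig := hH.eigenvalues_mem_spectrum_real i
    have hmem1 : (1 - hH.eigenvalues i) ∈ spectrum ℝ ((1 : Matrix (Fin C) (Fin C) ℝ) - Sig) := by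
      rw [spectrum.mem_iff] at hmem ⊢
      intro hu
      apply hmem
      have heq : algebraMap ℝ (Matrix (Fin C) (Fin C) ℝ) (1 - hH.eigenvalues i) - (1 - Sig)
          = -(algebraMap ℝ (Matrix (Fin C) (Fin C) ℝ) (hH.eigenvalues i) - Sig) := by
        rw [map_sub, _root_.map_one]; abel
      rw [heq] at hu
      simpa using hu.neg
    have hmem2 : (1 - hH.eigenvalues i)
        ∈ spectrum ℝ (Matrix.toEuclideanCLM (𝕜 := ℝ) (n := Fin C) (1 - Sig)) := by
      rwa [AlgEquiv.spectrum_eq]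
    have hle := spectrum.norm_le_norm_of_mem hmem2
    unfold opNorm2 at hnorm
    have h1 : |1 - hH.eigenvalues i| < 1 := by
      rw [← Real.norm_eq_abs]
      exact lt_of_le_of_lt hle hnorm
    have := abs_lt.mp h1
    linarith [this.1]
  -- the iterates are given by functional calculus
  have hfc : ∀ k, f k = cfc (pIter k) Sig := by
    intro k
    induction k with
    | zero => rw [hf0, pIter_zero]; exact (cfc_const_one ℝ Sig hSA).symm
    | succ k ih =>
      have hstep : cfc (pIter (k+1)) Sig
          = (1/2 : ℝ) • ((3:ℝ) • cfc (pIter k) Sig - (cfc (pIter k) Sig)^3 * Sig) := by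
        rw [pIter_succ]
        rw [cfc_const_mul (1/2 : ℝ) (fun x => 3 * pIter k x - (pIter k x)^3 * x) Sig (by fun_prop),
          cfc_sub (fun x => 3 * pIter k x) (fun x => (pIter k x)^3 * x) Sig (by fun_prop) (by fun_prop),
          cfc_const_mul (3:ℝ) (pIter k) Sig (by fun_prop),
          cfc_mul (fun x => (pIter k x)^3) (fun x => x) Sig (by fun_prop) (by fun_prop),
          cfc_pow (pIter k) 3 Sig (by fun_prop), cfc_id' ℝ Sig hSA]
      have h3 : (3:ℕ) • cfc (pIter k) Sig = (3:ℝ) • cfc (pIter k) Sig := by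
        rw [← Nat.cast_smul_eq_nsmul ℝ 3 (cfc (pIter k) Sig)]; norm_num
      rw [hfk, ih, hstep, h3]
  -- explicit diagonal form of cfc
  have hform : ∀ g : ℝ → ℝ, cfc g Sig
      = (hH.eigenvectorUnitary : Matrix (Fin C) (Fin C) ℝ)
        * diagonal (fun i => g (hH.eigenvalues i))
        * star (hH.eigenvectorUnitary : Matrix (Fin C) (Fin C) ℝ) := by
    intro g
    rw [hH.cfc_eq g]
    rfl
  have hUstar : star (hH.eigenvectorUnitary : Matrix (Fin C) (Fin C) ℝ)
      * (hH.eigenvectorUnitary : Matrix (Fin C) (Fin C) ℝ) = 1 :=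
    Unitary.star_mul_self_of_mem (SetLike.coe_mem _)
  have hUstar' : (hH.eigenvectorUnitary : Matrix (Fin C) (Fin C) ℝ)
      * star (hH.eigenvectorUnitary : Matrix (Fin C) (Fin C) ℝ) = 1 :=
    Unitary.mul_star_self_of_mem (SetLike.coe_mem _)
  have keymul : ∀ a b : Fin C → ℝ,
      ((hH.eigenvectorUnitary : Matrix (Fin C) (Fin C) ℝ) * diagonal a
          * star (hH.eigenvectorUnitary : Matrix (Fin C) (Fin C) ℝ))
        * ((hH.eigenvectorUnitary : Matrix (Fin C) (Fin C) ℝ) * diagonal b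
          * star (hH.eigenvectorUnitary : Matrix (Fin C) (Fin C) ℝ))
        = (hH.eigenvectorUnitary : Matrix (Fin C) (Fin C) ℝ)
          * diagonal (fun i => a i * b i)
          * star (hH.eigenvectorUnitary : Matrix (Fin C) (Fin C) ℝ) := by
    intro a b
    calc ((hH.eigenvectorUnitary : Matrix (Fin C) (Fin C) ℝ) * diagonal a
          * star (hH.eigenvectorUnitary : Matrix (Fin C) (Fin C) ℝ))
        * ((hH.eigenvectorUnitary : Matrix (Fin C) (Fin C) ℝ) * diagonal b
          * star (hH.eigenvectorUnitary : Matrix (Fin C) (Fin C) ℝ))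
        = (hH.eigenvectorUnitary : Matrix (Fin C) (Fin C) ℝ)
          * (diagonal a * (star (hH.eigenvectorUnitary : Matrix (Fin C) (Fin C) ℝ)
              * (hH.eigenvectorUnitary : Matrix (Fin C) (Fin C) ℝ)) * diagonal b)
          * star (hH.eigenvectorUnitary : Matrix (Fin C) (Fin C) ℝ) := by
          simp only [mul_assoc]
      _ = (hH.eigenvectorUnitary : Matrix (Fin C) (Fin C) ℝ) * (diagonal a * diagonal b)
          * star (hH.eigenvectorUnitary : Matrix (Fin C) (Fin C) ℝ) := by
          rw [hUstar, mul_one]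
      _ = _ := by rw [diagonal_mul_diagonal]
  -- S and its inverse
  have hP : Sig.PosSemidef := hSig.posSemidef
  have hS' : S = (hH.eigenvectorUnitary : Matrix (Fin C) (Fin C) ℝ)
      * diagonal (fun i => Real.sqrt (hH.eigenvalues i))
      * star (hH.eigenvectorUnitary : Matrix (Fin C) (Fin C) ℝ) := by
    rw [show S = cfc Real.sqrt Sig by
      open scoped MatrixOrder in
      rw [← CFC.sqrt_unique hSsq hS.posSemidef.nonneg, CFC.sqrt_eq_real_sqrt Sig hP.nonneg,
        cfcₙ_eq_cfc], hH.cfc_eq]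
    rfl
  have hSinv : S⁻¹ = (hH.eigenvectorUnitary : Matrix (Fin C) (Fin C) ℝ)
      * diagonal (fun i => (Real.sqrt (hH.eigenvalues i))⁻¹)
      * star (hH.eigenvectorUnitary : Matrix (Fin C) (Fin C) ℝ) := by
    apply Matrix.inv_eq_right_inv
    rw [hS', keymul]
    have hone : (fun i => Real.sqrt (hH.eigenvalues i) * (Real.sqrt (hH.eigenvalues i))⁻¹)
        = fun _ : Fin C => (1:ℝ) :=
      funext fun i => mul_inv_cancel₀ (Real.sqrt_pos.mpr (hpos i)).ne'
    rw [hone, show (diagonal (fun _ : Fin C => (1:ℝ))) = 1 from diagonal_one, mul_one, hUstar']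
  -- final convergence
  have hcont : Continuous (fun d : Fin C → ℝ =>
      (hH.eigenvectorUnitary : Matrix (Fin C) (Fin C) ℝ) * diagonal d
        * star (hH.eigenvectorUnitary : Matrix (Fin C) (Fin C) ℝ)) :=
    (continuous_const.matrix_mul (continuous_id.matrix_diagonal)).matrix_mul continuous_const
  have hdlim : Filter.Tendsto (fun k => fun i => pIter k (hH.eigenvalues i)) Filter.atTop
      (nhds (fun i => (Real.sqrt (hH.eigenvalues i))⁻¹)) :=
    tendsto_pi_nhds.mpr fun i => pIter_tendsto (hpos i) (hlt2 i)
  have hfinal := (hcont.tendsto _).comp hdlim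
  have hfeq : f = fun k => (hH.eigenvectorUnitary : Matrix (Fin C) (Fin C) ℝ)
      * diagonal (fun i => pIter k (hH.eigenvalues i))
      * star (hH.eigenvectorUnitary : Matrix (Fin C) (Fin C) ℝ) := by
    funext k
    rw [hfc k, hform]
  rw [hfeq, hSinv]
  exact hfinal
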